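/- Let k be a field and f ∈ k[[x₁,…,xₙ]] a nonzero formal power series. If k is infinite, then there exists a continuous k-algebra homomorphism k[[x₁,…,xₙ]] → k[[t]] (sending each xᵢ to a multiple aᵢt of t) under which the image of f is nonzero. -/

import Mathlib

/-- The continuous `k`-algebra homomorphism `k[[x₁,…,xₙ]] → k[[t]]` determined by the
substitution `xᵢ ↦ aᵢ·t`, described coefficientwise: the coefficient of `tᵐ` in the image
of `f` is `∑_{|d| = m} (coeff_d f) · ∏ᵢ aᵢ^{dᵢ}`. -/
noncomputable def substLine {k : Type*} [CommRing k] {n : ℕ} (a : Fin n → k)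
    (f : MvPowerSeries (Fin n) k) : PowerSeries k :=
  PowerSeries.mk fun m =>
    ∑ d ∈ Finset.finsuppAntidiag (Finset.univ : Finset (Fin n)) m,
      (MvPowerSeries.coeff d f) * ∏ i, a i ^ d i

/-- Let `k` be an infinite field and `f ∈ k[[x₁,…,xₙ]]` a nonzero formal
power series.  Then there is a continuous `k`-algebra homomorphism
`k[[x₁,…,xₙ]] → k[[t]]`, sending each `xᵢ` to a multiple `aᵢ·t` of `t`, under which the
image of `f` is nonzero. -/
theorem stmt_4 {k : Type*} [Field k] [Infinite k] {n : ℕ}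
    (f : MvPowerSeries (Fin n) k) (hf : f ≠ 0) :
    ∃ a : Fin n → k, substLine a f ≠ 0 := by
  obtain ⟨d, hd⟩ : ∃ d, MvPowerSeries.coeff d f ≠ 0 := by
    by_contra h
    push_neg at h
    exact hf (MvPowerSeries.ext fun d => by simp [h d])
  set m := Finset.univ.sum d with hm
  set P : MvPolynomial (Fin n) k :=
    ∑ d' ∈ Finset.finsuppAntidiag (Finset.univ : Finset (Fin n)) m,
      MvPolynomial.monomial d' (MvPowerSeries.coeff d' f) with hP
  have hdmem : d ∈ Finset.finsuppAntidiag (Finset.univ : Finset (Fin n)) m := by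
    simp [Finset.mem_finsuppAntidiag, hm]
  have hPne : P ≠ 0 := by
    intro h0
    have : MvPolynomial.coeff d P = MvPowerSeries.coeff d f := by
      rw [hP, MvPolynomial.coeff_sum]
      rw [Finset.sum_eq_single d]
      · simp
      · intro b _ hb; simp [MvPolynomial.coeff_monomial, hb]
      · intro h; exact absurd hdmem h
    rw [h0] at this
    simp at this
    exact hd this.symm
  have : ∃ a : Fin n → k, MvPolynomial.eval a P ≠ 0 := by
    by_contra h
    push_neg at h
    exact hPne (MvPolynomial.funext fun x => by simp [h x])
  obtain ⟨a, ha⟩ := this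
  refine ⟨a, fun h0 => ha ?_⟩
  have hc : PowerSeries.coeff m (substLine a f) = 0 := by rw [h0]; simp
  rw [substLine, PowerSeries.coeff_mk] at hc
  rw [hP, MvPolynomial.eval_sum]
  rw [← hc]
  refine Finset.sum_congr rfl fun d' hd' => ?_
  rw [MvPolynomial.eval_monomial]
  congr 1
  rw [Finsupp.prod_of_support_subset d' (Finset.subset_univ _) (fun i e => a i ^ e)
    (fun i _ => pow_zero (a i))]
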